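/- Let $v, w : [a,b] \to \mathbb{R}$ be bounded measurable functions with $v = v^{\sharp}$ its own increasing rearrangement (i.e., $v$ is increasing) and suppose $v$ is strictly increasing. If $w^{\ast}$ denotes the decreasing rearrangement of $w$, then $\int_a^b v\, w^{\ast}\,dx \le \int_a^b v\, w\,dx$, with equality if and only if $w = w^{\ast}$ (almost everywhere). -/

import Mathlib

open MeasureTheory Set


lemma int_ind (R c : ℝ) (hc : c ∈ Icc (-R) R) :
    ∫ t in Icc (-R) R, (if t < c then (1:ℝ) else 0) = c + R := by
  have h1 : (fun t => if t < c then (1:ℝ) else 0) = (Iio c).indicator (fun _ => (1:ℝ)) := by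
    ext t; simp [Set.indicator_apply, Set.mem_Iio]
  rw [show (∫ t in Icc (-R) R, (if t < c then (1:ℝ) else 0)) =
      ∫ t in Icc (-R) R, (Iio c).indicator (fun _ => (1:ℝ)) t from by rw [← h1]]
  rw [MeasureTheory.setIntegral_indicator measurableSet_Iio]
  have h2 : Icc (-R) R ∩ Iio c = Ico (-R) c := by
    ext t
    simp only [mem_inter_iff, mem_Icc, mem_Iio, mem_Ico]
    exact ⟨fun ⟨⟨u1, _⟩, u3⟩ => ⟨u1, u3⟩, fun ⟨u1, u2⟩ => ⟨⟨u1, u2.le.trans hc.2⟩, u2⟩⟩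
  rw [h2, MeasureTheory.setIntegral_const, measureReal_def, Real.volume_Ico, smul_eq_mul, mul_one,
    ENNReal.toReal_ofReal (by linarith [hc.1] : (0:ℝ) ≤ c - -R)]
  ring

lemma int_abs_core (R p q : ℝ) (hq : -R ≤ q) (hqp : q ≤ p) (hp : p ≤ R) :
    ∫ t in Icc (-R) R, |(if t < p then (1:ℝ) else 0) - (if t < q then (1:ℝ) else 0)| = p - q := by
  have h1 : (fun t => |(if t < p then (1:ℝ) else 0) - (if t < q then (1:ℝ) else 0)|)
      = (Ico q p).indicator (fun _ => (1:ℝ)) := by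
    ext t
    simp only [Set.indicator_apply, mem_Ico]
    split_ifs with h2 h3 h4 <;> simp_all <;> linarith
  rw [show (∫ t in Icc (-R) R, |(if t < p then (1:ℝ) else 0) - (if t < q then (1:ℝ) else 0)|)
      = ∫ t in Icc (-R) R, (Ico q p).indicator (fun _ => (1:ℝ)) t from by rw [← h1]]
  rw [MeasureTheory.setIntegral_indicator measurableSet_Ico]
  have h2 : Icc (-R) R ∩ Ico q p = Ico q p := by
    apply inter_eq_self_of_subset_right
    intro t ht
    exact ⟨hq.trans ht.1, ht.2.le.trans hp⟩
  rw [h2, MeasureTheory.setIntegral_const, measureReal_def, Real.volume_Ico, smul_eq_mul, mul_one,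
    ENNReal.toReal_ofReal (by linarith : (0:ℝ) ≤ p - q)]

lemma int_abs_ind (R p q : ℝ) (hp : p ∈ Icc (-R) R) (hq : q ∈ Icc (-R) R) :
    ∫ t in Icc (-R) R, |(if t < p then (1:ℝ) else 0) - (if t < q then (1:ℝ) else 0)|
      = |p - q| := by
  rcases le_total q p with h | h
  · rw [int_abs_core R p q hq.1 h hp.2, abs_of_nonneg (by linarith)]
  · have : ∀ t : ℝ, |(if t < p then (1:ℝ) else 0) - (if t < q then (1:ℝ) else 0)|
        = |(if t < q then (1:ℝ) else 0) - (if t < p then (1:ℝ) else 0)| := fun t => abs_sub_comm _ _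
    simp_rw [this]
    rw [int_abs_core R q p hp.1 h hq.2, abs_of_nonpos (by linarith)]
    ring

lemma exists_left {a b : ℝ} (hab : a ≤ b) {B : Set ℝ} (hBsub : B ⊆ Icc a b)
    (hdc : ∀ x ∈ B, ∀ y ∈ Icc a b, y ≤ x → y ∈ B) :
    ∃ c ∈ Icc a b, Ico a c ⊆ B ∧ B ⊆ Icc a c := by
  set c := sSup (insert a B) with hc
  have hbdd : BddAbove (insert a B) := by
    refine ⟨b, ?_⟩
    rintro x (rfl | hx)
    · exact hab
    · exact (hBsub hx).2
  have hne : (insert a B).Nonempty := ⟨a, mem_insert a B⟩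
  have hca : a ≤ c := le_csSup hbdd (mem_insert a B)
  have hcb : c ≤ b := csSup_le hne (by rintro x (rfl | hx); exacts [hab, (hBsub hx).2])
  refine ⟨c, ⟨hca, hcb⟩, ?_, ?_⟩
  · intro x hx
    obtain ⟨y, hy, hxy⟩ := exists_lt_of_lt_csSup hne hx.2
    rcases hy with rfl | hy
    · linarith [hx.1]
    · exact hdc y hy x ⟨hx.1, hx.2.le.trans hcb⟩ hxy.le
  · intro x hx
    exact ⟨(hBsub hx).1, le_csSup hbdd (mem_insert_of_mem a hx)⟩

lemma slice_lemma {a b : ℝ} {v : ℝ → ℝ} (hv : StrictMonoOn v (Icc a b))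
    (hvint : IntegrableOn v (Icc a b))
    {A B : Set ℝ} (hA : MeasurableSet A) (hB : MeasurableSet B)
    (hAsub : A ⊆ Icc a b) (hBsub : B ⊆ Icc a b)
    (hAB : volume A = volume B)
    {c : ℝ} (hc : c ∈ Icc a b) (hB1 : Ico a c ⊆ B) (hB2 : B ⊆ Icc a c) :
    0 ≤ (∫ x in A, v x) - ∫ x in B, v x ∧
      ((∫ x in A, v x) - ∫ x in B, v x = 0 →
        volume (A \ B) = 0 ∧ volume (B \ A) = 0) := by
  have hIccfin : volume (Icc a b) < ⊤ := isCompact_Icc.measure_lt_top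
  have hABfin : volume (A ∩ B) ≠ ⊤ := ((measure_mono (inter_subset_left.trans hAsub)).trans_lt hIccfin).ne
  have hdd : volume (A \ B) = volume (B \ A) := by
    have e1 : volume (A ∩ B) + volume (A \ B) = volume A := measure_inter_add_diff A hB
    have e2 : volume (B ∩ A) + volume (B \ A) = volume B := measure_inter_add_diff B hA
    rw [inter_comm] at e2
    have := e1.trans (hAB.trans e2.symm)
    exact (ENNReal.add_right_inj hABfin).1 this
  have hintA : IntegrableOn v A := hvint.mono_set hAsub
  have hintB : IntegrableOn v B := hvint.mono_set hBsub
  have hintAB : IntegrableOn v (A \ B) := hintA.mono_set diff_subset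
  have hintBA : IntegrableOn v (B \ A) := hintB.mono_set diff_subset
  have eA : (∫ x in A ∩ B, v x) + ∫ x in A \ B, v x = ∫ x in A, v x :=
    integral_inter_add_diff hB hintA
  have eB : (∫ x in B ∩ A, v x) + ∫ x in B \ A, v x = ∫ x in B, v x :=
    integral_inter_add_diff hA hintB
  rw [inter_comm] at eB
  have key : (∫ x in A, v x) - ∫ x in B, v x = (∫ x in A \ B, v x) - ∫ x in B \ A, v x := by
    rw [← eA, ← eB]; ring
  -- membership facts
  have hABc : A \ B ⊆ Icc c b := by
    intro x hx
    have hxI := hAsub hx.1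
    have : x ∉ Ico a c := fun h => hx.2 (hB1 h)
    simp only [mem_Ico, not_and, not_lt] at this
    exact ⟨this hxI.1, hxI.2⟩
  have hBAc : B \ A ⊆ Icc a c := fun x hx => hB2 hx.1
  -- bounds
  have m : (volume (A \ B)).toReal = (volume (B \ A)).toReal := by rw [hdd]
  have hup : (∫ x in B \ A, v x) ≤ (volume (B \ A)).toReal * v c := by
    have := setIntegral_mono_on hintBA (integrableOn_const
      ((measure_mono (diff_subset.trans hBsub)).trans_lt hIccfin).ne)
      (hB.diff hA) (fun x hx => hv.monotoneOn (hBsub hx.1) hc (hBAc hx).2)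
    simpa [MeasureTheory.setIntegral_const, smul_eq_mul, measureReal_def] using this
  have hlo : (volume (A \ B)).toReal * v c ≤ ∫ x in A \ B, v x := by
    have := setIntegral_mono_on (integrableOn_const
      ((measure_mono (diff_subset.trans hAsub)).trans_lt hIccfin).ne)
      hintAB (hA.diff hB) (fun x hx => hv.monotoneOn hc (hAsub hx.1) (hABc hx).1)
    simpa [MeasureTheory.setIntegral_const, smul_eq_mul, measureReal_def] using this
  constructor
  · rw [key]; rw [m] at hlo; linarith
  · intro heq
    rw [key] at heq
    rw [m] at hlo
    have hAeq : (∫ x in A \ B, v x) = (volume (B \ A)).toReal * v c := le_antisymm (by linarith) hlo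
    -- ∫_{A\B} (v x - v c) = 0
    have hzero : (∫ x in A \ B, (v x - v c)) = 0 := by
      rw [integral_sub hintAB (integrableOn_const
        ((measure_mono (diff_subset.trans hAsub)).trans_lt hIccfin).ne)]
      rw [MeasureTheory.setIntegral_const, smul_eq_mul, hAeq, measureReal_def, m]
      ring
    have hnn : 0 ≤ᵐ[volume.restrict (A \ B)] (fun x => v x - v c) := by
      refine (ae_restrict_iff' (hA.diff hB)).2 (Filter.Eventually.of_forall fun x hx => ?_)
      have h := hv.monotoneOn hc (hAsub hx.1) (hABc hx).1
      show (0:ℝ) ≤ v x - v c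
      linarith
    have hae := (setIntegral_eq_zero_iff_of_nonneg_ae hnn
      (hintAB.sub (integrableOn_const
        ((measure_mono (diff_subset.trans hAsub)).trans_lt hIccfin).ne))).1 hzero
    -- so a.e. on A \ B, v x = v c; but v strict mono ⇒ A \ B ⊆ {c} up to null
    have h0 : volume ({x | ¬ (v x - v c = 0)} ∩ (A \ B)) = 0 := by
      have h' := ae_iff.1 hae
      rwa [Measure.restrict_apply' (hA.diff hB)] at h'
    have hsub : A \ B ⊆ ({x | ¬ (v x - v c = 0)} ∩ (A \ B)) ∪ {c} := by
      intro x hx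
      rcases eq_or_ne x c with rfl | hne
      · exact Or.inr rfl
      · refine Or.inl ⟨?_, hx⟩
        have hxc : c < x := lt_of_le_of_ne (hABc hx).1 (Ne.symm hne)
        have := hv hc (hAsub hx.1) hxc
        simp only [mem_setOf_eq]
        intro h; linarith
    have hAB0 : volume (A \ B) = 0 := by
      refine le_antisymm ?_ zero_le
      calc volume (A \ B) ≤ volume (({x | ¬ (v x - v c = 0)} ∩ (A \ B)) ∪ {c}) :=
            measure_mono hsub
        _ ≤ volume ({x | ¬ (v x - v c = 0)} ∩ (A \ B)) + volume ({c} : Set ℝ) :=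
            measure_union_le _ _
        _ = 0 := by rw [h0, Real.volume_singleton]; simp
    exact ⟨hAB0, by rw [← hdd]; exact hAB0⟩

/-- Two functions are equimeasurable on `[a,b]`: their super-level sets have equal measure. -/
def EquimeasurableOn (a b : ℝ) (f g : ℝ → ℝ) : Prop :=
  ∀ c : ℝ, volume {x ∈ Icc a b | c < f x} = volume {x ∈ Icc a b | c < g x}

set_option maxHeartbeats 1000000 in
/-- Hardy–Littlewood–Pólya: if `v` is strictly increasing and `w*` is the decreasing
rearrangement of the bounded measurable function `w` on `[a,b]`, then
`∫ v w* ≤ ∫ v w`, with equality iff `w = w*` a.e. -/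
theorem hlp_decreasing_rearrangement (a b : ℝ) (hab : a < b)
    (v w wstar : ℝ → ℝ)
    (hvmeas : Measurable v) (hwmeas : Measurable w) (hwsmeas : Measurable wstar)
    (hvbd : ∃ M, ∀ x ∈ Icc a b, |v x| ≤ M) (hwbd : ∃ M, ∀ x ∈ Icc a b, |w x| ≤ M)
    (hv : StrictMonoOn v (Icc a b))
    (hws_anti : AntitoneOn wstar (Icc a b))
    (hws_equi : EquimeasurableOn a b w wstar) :
    (∫ x in a..b, v x * wstar x) ≤ ∫ x in a..b, v x * w x ∧
    ((∫ x in a..b, v x * wstar x) = (∫ x in a..b, v x * w x) ↔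
      w =ᵐ[volume.restrict (Icc a b)] wstar) := by
  obtain ⟨Mv0, hMv⟩ := hvbd
  obtain ⟨Mw0, hMw⟩ := hwbd
  set Kv : ℝ := |Mv0| + 1 with hKv
  set R : ℝ := |Mw0| + 1 with hR
  set I : Set ℝ := Icc a b with hI
  set μ : Measure ℝ := volume.restrict I with hμ
  set ν : Measure ℝ := volume.restrict (Icc (-R) R) with hν
  haveI : IsFiniteMeasure μ := ⟨by
    rw [hμ, Measure.restrict_apply_univ]; exact isCompact_Icc.measure_lt_top⟩
  haveI : IsFiniteMeasure ν := ⟨by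
    rw [hν, Measure.restrict_apply_univ]; exact isCompact_Icc.measure_lt_top⟩
  have hIm : MeasurableSet I := measurableSet_Icc
  -- bounds
  have hvK : ∀ x ∈ I, |v x| ≤ Kv := fun x hx => (hMv x hx).trans (by rw [hKv]; linarith [le_abs_self Mv0])
  have hwR : ∀ x ∈ I, w x ∈ Icc (-R) R := fun x hx => by
    have := hMw x hx
    have h2 := abs_le.1 this
    constructor <;> [skip; skip] <;> rw [hR] <;> cases h2 <;> nlinarith [le_abs_self Mw0, neg_abs_le Mw0]
  -- a.e. bound for wstar
  have hwsRae : ∀ᵐ x ∂μ, wstar x ∈ Icc (-R) R := by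
    have hup : volume {x ∈ I | |Mw0| < wstar x} = 0 := by
      rw [← hws_equi |Mw0|]
      convert measure_empty
      · ext x
        simp only [mem_setOf_eq, mem_empty_iff_false, iff_false, not_and]
        intro hx
        have := abs_le.1 (hMw x hx)
        push_neg
        linarith [le_abs_self Mw0, neg_abs_le Mw0]
      · infer_instance
    have hlow : volume {x ∈ I | -R < wstar x} = volume I := by
      rw [← hws_equi (-R)]
      congr 1
      ext x
      simp only [mem_setOf_eq]
      constructor
      · exact fun h => h.1
      · intro hx
        refine ⟨hx, ?_⟩
        have := abs_le.1 (hMw x hx)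
        rw [hR]; linarith [neg_abs_le Mw0, le_abs_self Mw0]
    -- translate to a.e.
    have hsetu : MeasurableSet {x | x ∈ I ∧ |Mw0| < wstar x} :=
      hIm.inter (measurableSet_lt measurable_const hwsmeas)
    have hsetl : MeasurableSet {x | x ∈ I ∧ -R < wstar x} :=
      hIm.inter (measurableSet_lt measurable_const hwsmeas)
    have h1 : ∀ᵐ x ∂μ, wstar x ≤ R := by
      rw [ae_iff]
      rw [Measure.restrict_apply' hIm]
      refine measure_mono_null ?_ hup
      intro x hx
      simp only [mem_inter_iff, mem_setOf_eq, not_le] at hx ⊢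
      refine ⟨hx.2, lt_of_le_of_lt (by rw [hR]; linarith) hx.1⟩
    have h2 : ∀ᵐ x ∂μ, -R ≤ wstar x := by
      rw [ae_iff, Measure.restrict_apply' hIm]
      have : {x | ¬ -R ≤ wstar x} ∩ I ⊆ I \ {x | x ∈ I ∧ -R < wstar x} := by
        intro x hx
        simp only [mem_setOf_eq, not_le] at hx
        exact ⟨hx.2, fun h => absurd h.2 (not_lt.2 hx.1.le)⟩
      refine measure_mono_null this ?_
      rw [measure_diff (fun x hx => hx.1) hsetl.nullMeasurableSet
        ((measure_mono (fun x hx => hx.1)).trans_lt isCompact_Icc.measure_lt_top).ne, hlow]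
      simp
    filter_upwards [h1, h2] with x hx1 hx2 using ⟨hx2, hx1⟩
  have hKv0 : (0:ℝ) ≤ Kv := by rw [hKv]; positivity
  set d : ℝ → ℝ → ℝ := fun t x => (if t < w x then (1:ℝ) else 0) - (if t < wstar x then 1 else 0) with hd
  set f : ℝ → ℝ → ℝ := fun x t => v x * d t x with hf
  have hdm : Measurable (fun p : ℝ × ℝ => d p.2 p.1) := by
    apply Measurable.sub
    · exact Measurable.ite (measurableSet_lt measurable_snd (hwmeas.comp measurable_fst))
        measurable_const measurable_const
    · exact Measurable.ite (measurableSet_lt measurable_snd (hwsmeas.comp measurable_fst))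
        measurable_const measurable_const
  have hfm : Measurable (Function.uncurry f) := (hvmeas.comp measurable_fst).mul hdm
  have hdb : ∀ t x, |d t x| ≤ 1 := by
    intro t x; rw [hd]; simp only; split_ifs <;> norm_num
  have haeI : ∀ᵐ p ∂(μ.prod ν), p.1 ∈ I := by
    rw [ae_iff]
    have he : {p : ℝ × ℝ | ¬ p.1 ∈ I} = (Iᶜ) ×ˢ (univ : Set ℝ) := by ext p; simp
    rw [he, Measure.prod_prod, hμ, Measure.restrict_apply' hIm]
    simp
  have hfint : Integrable (Function.uncurry f) (μ.prod ν) := by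
    refine Integrable.mono' (integrable_const Kv) hfm.aestronglyMeasurable ?_
    filter_upwards [haeI] with p hp
    have he : ‖Function.uncurry f p‖ = |v p.1| * |d p.2 p.1| := by
      simp [Function.uncurry, hf, abs_mul]
    rw [he]
    calc |v p.1| * |d p.2 p.1| ≤ Kv * 1 :=
          mul_le_mul (hvK _ hp) (hdb _ _) (abs_nonneg _) hKv0
      _ = Kv := mul_one Kv
  have hvint : IntegrableOn v I := by
    refine Integrable.mono' (integrable_const Kv) hvmeas.aestronglyMeasurable ?_
    filter_upwards [ae_restrict_mem hIm] with x hx using hvK x hx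
  -- inner t-integral of f
  have hind_int : ∀ c : ℝ, Integrable (fun t => if t < c then (1:ℝ) else 0) ν := by
    intro c
    have he : (fun t => if t < c then (1:ℝ) else 0) = (Iio c).indicator (fun _ => (1:ℝ)) := by
      ext t; simp [indicator_apply]
    rw [he]
    exact (integrable_const 1).indicator measurableSet_Iio
  have hLHS : ∀ᵐ x ∂μ, (∫ t, f x t ∂ν) = v x * (w x - wstar x) := by
    filter_upwards [ae_restrict_mem hIm, hwsRae] with x hxI hxs
    have e1 : (∫ t, f x t ∂ν) = v x * ∫ t, d t x ∂ν := by
      rw [hf]; exact integral_const_mul (v x) _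
    rw [e1]
    have e2 : (∫ t, d t x ∂ν)
        = (∫ t, (if t < w x then (1:ℝ) else 0) ∂ν) - ∫ t, (if t < wstar x then (1:ℝ) else 0) ∂ν :=
      integral_sub (hind_int (w x)) (hind_int (wstar x))
    rw [e2, hν]
    rw [int_ind R (w x) (hwR x hxI), int_ind R (wstar x) hxs]
    ring
  have hμint_vw : Integrable (fun x => v x * w x) μ := by
    refine Integrable.mono' (integrable_const (Kv * R)) (hvmeas.mul hwmeas).aestronglyMeasurable ?_
    filter_upwards [ae_restrict_mem hIm] with x hx
    rw [Real.norm_eq_abs, abs_mul]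
    exact mul_le_mul (hvK x hx) (abs_le.2 (hwR x hx)) (abs_nonneg _) hKv0
  have hμint_vws : Integrable (fun x => v x * wstar x) μ := by
    refine Integrable.mono' (integrable_const (Kv * R)) (hvmeas.mul hwsmeas).aestronglyMeasurable ?_
    filter_upwards [ae_restrict_mem hIm, hwsRae] with x hx hxs
    rw [Real.norm_eq_abs, abs_mul]
    exact mul_le_mul (hvK x hx) (abs_le.2 hxs) (abs_nonneg _) hKv0
  have hLHS2 : (∫ x, (∫ t, f x t ∂ν) ∂μ) = (∫ x, v x * w x ∂μ) - ∫ x, v x * wstar x ∂μ := by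
    rw [integral_congr_ae hLHS]
    have he : (fun x => v x * (w x - wstar x)) = fun x => v x * w x - v x * wstar x := by
      ext x; ring
    rw [he, integral_sub hμint_vw hμint_vws]
  -- per-slice identification
  have hSm : ∀ t : ℝ, MeasurableSet {x | t < w x} := fun t => measurableSet_lt measurable_const hwmeas
  have hTm : ∀ t : ℝ, MeasurableSet {x | t < wstar x} := fun t => measurableSet_lt measurable_const hwsmeas
  have hint_piece : ∀ (g : ℝ → ℝ), Measurable g → ∀ t : ℝ,
      (∫ x, v x * (if t < g x then (1:ℝ) else 0) ∂μ) = ∫ x in {x | x ∈ I ∧ t < g x}, v x := by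
    intro g hg t
    have e1 : (fun x => v x * (if t < g x then (1:ℝ) else 0)) = ({x | t < g x}).indicator v := by
      ext x
      simp only [indicator_apply, mem_setOf_eq]
      split_ifs <;> simp
    have hseteq : {x | t < g x} ∩ I = {x | x ∈ I ∧ t < g x} := by
      ext x; exact ⟨fun h => ⟨h.2, h.1⟩, fun h => ⟨h.2, h.1⟩⟩
    rw [e1, integral_indicator (measurableSet_lt measurable_const hg)]
    rw [hμ, Measure.restrict_restrict (measurableSet_lt measurable_const hg), hseteq]
  have hH : ∀ t : ℝ, (∫ x, f x t ∂μ)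
      = (∫ x in {x | x ∈ I ∧ t < w x}, v x) - ∫ x in {x | x ∈ I ∧ t < wstar x}, v x := by
    intro t
    have he : (fun x => f x t) = fun x =>
        v x * (if t < w x then (1:ℝ) else 0) - v x * (if t < wstar x then (1:ℝ) else 0) := by
      ext x; rw [hf, hd]; ring
    have i1 : Integrable (fun x => v x * (if t < w x then (1:ℝ) else 0)) μ := by
      have e1 : (fun x => v x * (if t < w x then (1:ℝ) else 0)) = ({x | t < w x}).indicator v := by
        ext x; simp only [indicator_apply, mem_setOf_eq]; split_ifs <;> simp
      rw [e1]; exact hvint.indicator (hSm t)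
    have i2 : Integrable (fun x => v x * (if t < wstar x then (1:ℝ) else 0)) μ := by
      have e1 : (fun x => v x * (if t < wstar x then (1:ℝ) else 0)) = ({x | t < wstar x}).indicator v := by
        ext x; simp only [indicator_apply, mem_setOf_eq]; split_ifs <;> simp
      rw [e1]; exact hvint.indicator (hTm t)
    rw [he, integral_sub i1 i2, hint_piece w hwmeas t, hint_piece wstar hwsmeas t]
  have hslice : ∀ t : ℝ,
      0 ≤ (∫ x in {x | x ∈ I ∧ t < w x}, v x) - ∫ x in {x | x ∈ I ∧ t < wstar x}, v x ∧
      ((∫ x in {x | x ∈ I ∧ t < w x}, v x) - (∫ x in {x | x ∈ I ∧ t < wstar x}, v x) = 0 →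
        volume ({x | x ∈ I ∧ t < w x} \ {x | x ∈ I ∧ t < wstar x}) = 0 ∧
        volume ({x | x ∈ I ∧ t < wstar x} \ {x | x ∈ I ∧ t < w x}) = 0) := by
    intro t
    have hAm : MeasurableSet {x | x ∈ I ∧ t < w x} := hIm.inter (hSm t)
    have hBm : MeasurableSet {x | x ∈ I ∧ t < wstar x} := hIm.inter (hTm t)
    obtain ⟨c, hc, hB1, hB2⟩ := exists_left (B := {x | x ∈ I ∧ t < wstar x}) hab.le
      (fun x hx => hx.1)
      (fun x hx y hy hyx => ⟨hy, lt_of_lt_of_le hx.2 (hws_anti hy hx.1 hyx)⟩)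
    exact slice_lemma hv hvint hAm hBm (fun x hx => hx.1) (fun x hx => hx.1)
      (hws_equi t) hc hB1 hB2
  -- main identity
  have hmain : (∫ x, v x * w x ∂μ) - (∫ x, v x * wstar x ∂μ) = ∫ t, (∫ x, f x t ∂μ) ∂ν := by
    rw [← hLHS2]
    exact integral_integral_swap hfint
  have hHnn : ∀ t : ℝ, 0 ≤ ∫ x, f x t ∂μ := fun t => by rw [hH t]; exact (hslice t).1
  have hnn : 0 ≤ ∫ t, (∫ x, f x t ∂μ) ∂ν := integral_nonneg hHnn
  have hconvw : (∫ x in a..b, v x * w x) = ∫ x, v x * w x ∂μ := by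
    rw [intervalIntegral.integral_of_le hab.le, hμ, hI, ← integral_Icc_eq_integral_Ioc]
  have hconvws : (∫ x in a..b, v x * wstar x) = ∫ x, v x * wstar x ∂μ := by
    rw [intervalIntegral.integral_of_le hab.le, hμ, hI, ← integral_Icc_eq_integral_Ioc]
  constructor
  · rw [hconvw, hconvws]; linarith
  constructor
  · -- equality ⇒ a.e. equal
    intro heq
    rw [hconvw, hconvws] at heq
    have h0 : (∫ t, (∫ x, f x t ∂μ) ∂ν) = 0 := by rw [← hmain]; linarith
    have hHint : Integrable (fun t => ∫ x, f x t ∂μ) ν := by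
      have := hfint.integral_prod_right
      exact this
    have hH0 : (fun t => ∫ x, f x t ∂μ) =ᵐ[ν] 0 :=
      (integral_eq_zero_iff_of_nonneg hHnn hHint).1 h0
    have hnull : ∀ᵐ t ∂ν, volume ({x | x ∈ I ∧ t < w x} \ {x | x ∈ I ∧ t < wstar x}) = 0 ∧
        volume ({x | x ∈ I ∧ t < wstar x} \ {x | x ∈ I ∧ t < w x}) = 0 := by
      filter_upwards [hH0] with t ht
      refine (hslice t).2 ?_
      rw [← hH t]
      simpa using ht
    -- second Fubini for |d|
    have hgint : Integrable (Function.uncurry (fun x t => |d t x|)) (μ.prod ν) := by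
      refine Integrable.mono' (integrable_const 1) ?_ ?_
      · exact (hdm.abs).aestronglyMeasurable
      · refine Filter.Eventually.of_forall fun p => ?_
        simpa [Function.uncurry] using hdb p.2 p.1
    have hUzero : ∀ᵐ t ∂ν, (∫ x, |d t x| ∂μ) = 0 := by
      filter_upwards [hnull] with t ht
      obtain ⟨h1, h2⟩ := ht
      set U : Set ℝ := ({x | t < w x} \ {x | t < wstar x}) ∪ ({x | t < wstar x} \ {x | t < w x})
        with hU
      have hUm : MeasurableSet U := ((hSm t).diff (hTm t)).union ((hTm t).diff (hSm t))
      have he : (fun x => |d t x|) = U.indicator (fun _ => (1:ℝ)) := by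
        ext x
        rw [hd, hU]
        by_cases h4 : t < w x <;> by_cases h5 : t < wstar x <;>
          simp [indicator_apply, mem_union, mem_diff, mem_setOf_eq, h4, h5]
      rw [he, integral_indicator hUm, setIntegral_const, smul_eq_mul, mul_one]
      have hmeq : μ U = 0 := by
        rw [hμ, Measure.restrict_apply' hIm]
        have hsub : U ∩ I ⊆ ({x | x ∈ I ∧ t < w x} \ {x | x ∈ I ∧ t < wstar x}) ∪
            ({x | x ∈ I ∧ t < wstar x} \ {x | x ∈ I ∧ t < w x}) := by
          rintro x ⟨hxU, hxI⟩
          rcases hxU with ⟨hs, hts⟩ | ⟨hts, hs⟩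
          · exact Or.inl ⟨⟨hxI, hs⟩, fun h => hts h.2⟩
          · exact Or.inr ⟨⟨hxI, hts⟩, fun h => hs h.2⟩
        refine measure_mono_null hsub ?_
        refine le_antisymm ?_ zero_le
        calc volume _ ≤ volume ({x | x ∈ I ∧ t < w x} \ {x | x ∈ I ∧ t < wstar x}) +
              volume ({x | x ∈ I ∧ t < wstar x} \ {x | x ∈ I ∧ t < w x}) := measure_union_le _ _
          _ = 0 := by rw [h1, h2, add_zero]
      rw [measureReal_def, hmeq]
      simp
    have hswap2 : (∫ x, (∫ t, |d t x| ∂ν) ∂μ) = ∫ t, (∫ x, |d t x| ∂μ) ∂ν :=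
      integral_integral_swap hgint
    have hrhs0 : (∫ t, (∫ x, |d t x| ∂μ) ∂ν) = 0 := by
      rw [integral_congr_ae hUzero]; simp
    have hinner : ∀ᵐ x ∂μ, (∫ t, |d t x| ∂ν) = |w x - wstar x| := by
      filter_upwards [ae_restrict_mem hIm, hwsRae] with x hxI hxs
      have e : (fun t => |d t x|) = fun t =>
          |(if t < w x then (1:ℝ) else 0) - (if t < wstar x then (1:ℝ) else 0)| := by
        ext t; rw [hd]
      rw [e, hν]
      exact int_abs_ind R (w x) (wstar x) (hwR x hxI) hxs
    have habs0 : (∫ x, |w x - wstar x| ∂μ) = 0 := by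
      rw [← integral_congr_ae hinner, hswap2, hrhs0]
    have habsint : Integrable (fun x => |w x - wstar x|) μ := by
      refine Integrable.mono' (integrable_const (R + R)) ?_ ?_
      · exact ((hwmeas.sub hwsmeas).abs).aestronglyMeasurable
      · filter_upwards [ae_restrict_mem hIm, hwsRae] with x hxI hxs
        have h1 := abs_le.2 (hwR x hxI)
        have h2 := abs_le.2 hxs
        rw [Real.norm_eq_abs, abs_abs]
        calc |w x - wstar x| ≤ |w x| + |wstar x| := abs_sub _ _
          _ ≤ R + R := add_le_add h1 h2
    have hae0 : (fun x => |w x - wstar x|) =ᵐ[μ] 0 :=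
      (integral_eq_zero_iff_of_nonneg (fun x => abs_nonneg _) habsint).1 habs0
    filter_upwards [hae0] with x hx
    have : |w x - wstar x| = 0 := hx
    have := abs_eq_zero.1 this
    linarith [sub_eq_zero.1 this]
  · -- a.e. equal ⇒ equality
    intro hae
    rw [hconvw, hconvws]
    refine integral_congr_ae ?_
    filter_upwards [hae] with x hx
    rw [hx]
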